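/- Exponential-moment domination for submodular functions: Let X_1,...,X_n be {0,1}-valued 1-negatively associated random variables and let X_1*,...,X_n* be mutually independent {0,1}-valued random variables where X_i* has the same marginal distribution as X_i. Then for every monotone non-decreasing submodular f : {0,1}^n → ℝ and every λ < 0, E[exp(λ·f(X_1,...,X_n))] ≤ E[exp(λ·f(X_1*,...,X_n*))]. -/

import Mathlib

open MeasureTheory ProbabilityTheory Real Finset

/-- A vector is binary if each coordinate is 0 or 1. -/
def BinaryVec {m : ℕ} (x : Fin m → ℝ) : Prop := ∀ i, x i = 0 ∨ x i = 1

/-- Monotone non-decreasing on the Boolean cube. -/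
def MonoCube {m : ℕ} (f : (Fin m → ℝ) → ℝ) : Prop :=
  ∀ x y : Fin m → ℝ, BinaryVec x → BinaryVec y → x ≤ y → f x ≤ f y

/-- Submodular on the Boolean cube: marginal gains are coordinatewise non-increasing. -/
def SubmodCube {m : ℕ} (f : (Fin m → ℝ) → ℝ) : Prop :=
  ∀ (i : Fin m) (x y : Fin m → ℝ), BinaryVec x → BinaryVec y → x ≤ y →
    f (Function.update y i 1) - f (Function.update y i 0) ≤
      f (Function.update x i 1) - f (Function.update x i 0)

/-- Supermodular on the Boolean cube: marginal gains are coordinatewise non-decreasing. -/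
def SupermodCube {m : ℕ} (f : (Fin m → ℝ) → ℝ) : Prop :=
  ∀ (i : Fin m) (x y : Fin m → ℝ), BinaryVec x → BinaryVec y → x ≤ y →
    f (Function.update x i 1) - f (Function.update x i 0) ≤
      f (Function.update y i 1) - f (Function.update y i 0)

/-- 1-negative association for binary random variables: for every coordinate `i`,
every monotone `F` depending only on coordinates `≠ i` and every monotone `G` of `X i`,
`E[F·G] ≤ E[F]·E[G]`. -/
def OneNA {Ω : Type*} [MeasurableSpace Ω] (μ : Measure Ω) {m : ℕ} (X : Fin m → Ω → ℝ) : Prop :=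
  ∀ (i : Fin m) (F : (Fin m → ℝ) → ℝ) (G : ℝ → ℝ),
    Measurable F → MonoCube F →
    (∀ x y : Fin m → ℝ, (∀ j, j ≠ i → x j = y j) → F x = F y) →
    Measurable G → Monotone G →
    ∫ ω, F (fun j => X j ω) * G (X i ω) ∂μ ≤
      (∫ ω, F (fun j => X j ω) ∂μ) * ∫ ω, G (X i ω) ∂μ

namespace ExpDom

variable {n : ℕ}

noncomputable def Bop (p : ℝ) (i : Fin n) (g : (Fin n → ℝ) → ℝ) : (Fin n → ℝ) → ℝ :=
  fun x => (1 - p) * g (Function.update x i 0) + p * g (Function.update x i 1)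

noncomputable def Gop (p : Fin n → ℝ) (g : (Fin n → ℝ) → ℝ) : ℕ → ((Fin n → ℝ) → ℝ)
  | 0 => g
  | (j+1) => if h : n - (j+1) < n then
      Bop (p ⟨n - (j+1), h⟩) ⟨n - (j+1), h⟩ (Gop p g j) else Gop p g j

def DeltaF (i : Fin n) (g : (Fin n → ℝ) → ℝ) : (Fin n → ℝ) → ℝ :=
  fun x => g (Function.update x i 1) - g (Function.update x i 0)

def GoodDelta (g : (Fin n → ℝ) → ℝ) : Prop := ∀ i : Fin n, MonoCube (DeltaF i g)

lemma bin_update {x : Fin n → ℝ} (hx : BinaryVec x) (i : Fin n) {c : ℝ}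
    (hc : c = 0 ∨ c = 1) : BinaryVec (Function.update x i c) := by
  intro j
  rcases eq_or_ne j i with rfl | hj
  · simpa using hc
  · simpa [Function.update_of_ne hj] using hx j

lemma update_mono {x y : Fin n → ℝ} (hxy : x ≤ y) (i : Fin n) (c : ℝ) :
    Function.update x i c ≤ Function.update y i c := by
  intro j
  rcases eq_or_ne j i with rfl | hj
  · simp
  · simpa [Function.update_of_ne hj] using hxy j

lemma upd0_le_upd1 (x : Fin n → ℝ) (i : Fin n) :
    Function.update x i (0:ℝ) ≤ Function.update x i 1 := by
  intro j
  rcases eq_or_ne j i with rfl | hj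
  · simp
  · simp [Function.update_of_ne hj]

lemma deltaF_congr {g : (Fin n → ℝ) → ℝ} {i : Fin n} {x y : Fin n → ℝ}
    (hxy : ∀ j, j ≠ i → x j = y j) : DeltaF i g x = DeltaF i g y := by
  have h1 : ∀ c : ℝ, Function.update x i c = Function.update y i c := by
    intro c; funext j
    rcases eq_or_ne j i with rfl | hj
    · simp
    · simp [Function.update_of_ne hj, hxy j hj]
  simp [DeltaF, h1]

lemma meas_Bop {p : ℝ} {i : Fin n} {g : (Fin n → ℝ) → ℝ} (hg : Measurable g) :
    Measurable (Bop p i g) :=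
  ((hg.comp measurable_update_left).const_mul _).add
    ((hg.comp measurable_update_left).const_mul _)

lemma meas_DeltaF {i : Fin n} {g : (Fin n → ℝ) → ℝ} (hg : Measurable g) :
    Measurable (DeltaF i g) :=
  (hg.comp measurable_update_left).sub (hg.comp measurable_update_left)

lemma meas_Gop {p : Fin n → ℝ} {g : (Fin n → ℝ) → ℝ} (hg : Measurable g) :
    ∀ j, Measurable (Gop p g j)
  | 0 => hg
  | (j+1) => by
      unfold Gop
      split
      · exact meas_Bop (meas_Gop hg j)
      · exact meas_Gop hg j

lemma DeltaF_Bop_ne {p : ℝ} {i j : Fin n} (hij : i ≠ j) (g : (Fin n → ℝ) → ℝ) :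
    DeltaF i (Bop p j g) = fun x =>
      (1 - p) * DeltaF i g (Function.update x j 0) + p * DeltaF i g (Function.update x j 1) := by
  funext x
  simp only [DeltaF, Bop]
  rw [Function.update_comm hij (1:ℝ) (0:ℝ) x, Function.update_comm hij (1:ℝ) (1:ℝ) x,
    Function.update_comm hij (0:ℝ) (0:ℝ) x, Function.update_comm hij (0:ℝ) (1:ℝ) x]
  ring

lemma DeltaF_Bop_self {p : ℝ} {j : Fin n} (g : (Fin n → ℝ) → ℝ) :
    DeltaF j (Bop p j g) = fun _ => 0 := by
  funext x
  simp only [DeltaF, Bop, Function.update_idem]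
  ring

lemma good_Bop {p : ℝ} (hp0 : 0 ≤ p) (hp1 : p ≤ 1) {j : Fin n} {g : (Fin n → ℝ) → ℝ}
    (hg : GoodDelta g) : GoodDelta (Bop p j g) := by
  intro i
  rcases eq_or_ne i j with rfl | hij
  · rw [DeltaF_Bop_self]
    intro x y _ _ _; exact le_rfl
  · rw [DeltaF_Bop_ne hij]
    intro x y hx hy hxy
    have h0 := hg i (Function.update x j 0) (Function.update y j 0)
      (bin_update hx j (Or.inl rfl)) (bin_update hy j (Or.inl rfl)) (update_mono hxy j 0)
    have h1 := hg i (Function.update x j 1) (Function.update y j 1)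
      (bin_update hx j (Or.inr rfl)) (bin_update hy j (Or.inr rfl)) (update_mono hxy j 1)
    have : (0:ℝ) ≤ 1 - p := by linarith
    exact add_le_add (mul_le_mul_of_nonneg_left h0 this) (mul_le_mul_of_nonneg_left h1 hp0)

lemma good_Gop {p : Fin n → ℝ} (hp0 : ∀ i, 0 ≤ p i) (hp1 : ∀ i, p i ≤ 1)
    {g : (Fin n → ℝ) → ℝ} (hg : GoodDelta g) : ∀ j, GoodDelta (Gop p g j)
  | 0 => hg
  | (j+1) => by
      unfold Gop
      split
      · exact good_Bop (hp0 _) (hp1 _) (good_Gop hp0 hp1 hg j)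
      · exact good_Gop hp0 hp1 hg j

lemma good_base {f : (Fin n → ℝ) → ℝ} (hf : MonoCube f) (hsub : SubmodCube f)
    {l : ℝ} (hl : l < 0) : GoodDelta (fun x => Real.exp (l * f x)) := by
  intro i x y hx hy hxy
  simp only [DeltaF]
  set a0 := f (Function.update x i 0) with ha0
  set a1 := f (Function.update x i 1) with ha1
  set b0 := f (Function.update y i 0) with hb0
  set b1 := f (Function.update y i 1) with hb1
  have hbx0 := bin_update hx i (Or.inl rfl)
  have hbx1 := bin_update hx i (Or.inr rfl)
  have hby0 := bin_update hy i (Or.inl rfl)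
  have hby1 := bin_update hy i (Or.inr rfl)
  have ha01 : a0 ≤ a1 := hf _ _ hbx0 hbx1 (upd0_le_upd1 x i)
  have hb01 : b0 ≤ b1 := hf _ _ hby0 hby1 (upd0_le_upd1 y i)
  have hab0 : a0 ≤ b0 := hf _ _ hbx0 hby0 (update_mono hxy i 0)
  have hsub' : b1 - b0 ≤ a1 - a0 := hsub i x y hx hy hxy
  have e1 : Real.exp (l * a1) = Real.exp (l * a0) * Real.exp (l * (a1 - a0)) := by
    rw [← Real.exp_add]; ring_nf
  have e2 : Real.exp (l * b1) = Real.exp (l * b0) * Real.exp (l * (b1 - b0)) := by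
    rw [← Real.exp_add]; ring_nf
  have h1 : Real.exp (l * (a1 - a0)) ≤ Real.exp (l * (b1 - b0)) :=
    Real.exp_le_exp.2 (by nlinarith)
  have h2 : Real.exp (l * (b1 - b0)) ≤ 1 :=
    Real.exp_le_one_iff.2 (by nlinarith)
  have h3 : Real.exp (l * b0) ≤ Real.exp (l * a0) := Real.exp_le_exp.2 (by nlinarith)
  have hA := Real.exp_pos (l * a0)
  have hB := Real.exp_pos (l * b0)
  rw [e1, e2]
  nlinarith [mul_le_mul_of_nonneg_left h1 hA.le,
    mul_le_mul_of_nonpos_right h3 (sub_nonpos.2 h2)]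


section Prob

variable {Ω : Type*} [MeasurableSpace Ω] (μ : Measure Ω) [IsProbabilityMeasure μ]

/-- Composition of a measurable function with a binary random vector is integrable. -/
lemma intble (Y : Fin n → Ω → ℝ) (hY : ∀ i, Measurable (Y i))
    (hb : ∀ i ω, Y i ω = 0 ∨ Y i ω = 1) (h : (Fin n → ℝ) → ℝ) (hm : Measurable h) :
    Integrable (fun ω => h (fun j => Y j ω)) μ := by
  classical
  have hmeas : Measurable fun ω => h (fun j => Y j ω) :=
    hm.comp (measurable_pi_lambda _ fun j => hY j)
  set F : (Fin n → Bool) → ℝ := fun s => |h (fun j => if s j then (1:ℝ) else 0)| with hF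
  obtain ⟨C, hC⟩ : ∃ C : ℝ, ∀ s : Fin n → Bool, F s ≤ C :=
    ⟨(Finset.univ : Finset (Fin n → Bool)).sup' ⟨fun _ => false, Finset.mem_univ _⟩ F,
      fun s => Finset.le_sup' F (Finset.mem_univ s)⟩
  refine (integrable_const C).mono' hmeas.aestronglyMeasurable (ae_of_all _ fun ω => ?_)
  have hvec : (fun j => Y j ω) = fun j => if (fun j => decide (Y j ω = 1)) j then (1:ℝ) else 0 := by
    funext j
    rcases hb j ω with h0 | h1
    · simp [h0]
    · simp [h1]
  rw [Real.norm_eq_abs, hvec]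
  exact hC fun j => decide (Y j ω = 1)

variable {X : Fin n → Ω → ℝ}

/-- Pointwise binary decomposition. -/
lemma decomp (hbin : ∀ i ω, X i ω = 0 ∨ X i ω = 1) (g : (Fin n → ℝ) → ℝ) (i : Fin n) (ω : Ω) :
    g (fun j => X j ω) = g (Function.update (fun j => X j ω) i 0)
      + DeltaF i g (fun j => X j ω) * X i ω := by
  rcases hbin i ω with h0 | h1
  · have : Function.update (fun j => X j ω) i (0:ℝ) = fun j => X j ω :=
      Function.update_eq_self_iff.2 h0.symm
    rw [h0, this]; ring
  · have : Function.update (fun j => X j ω) i (1:ℝ) = fun j => X j ω :=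
      Function.update_eq_self_iff.2 h1.symm
    simp only [DeltaF, this, h1]; ring

/-- One replacement step, inequality version, via 1-negative association. -/
lemma step_le (hX : ∀ i, Measurable (X i)) (hbin : ∀ i ω, X i ω = 0 ∨ X i ω = 1)
    (hNA : OneNA μ X) {g : (Fin n → ℝ) → ℝ} (hg : Measurable g) (hgood : GoodDelta g)
    (i : Fin n) :
    ∫ ω, g (fun j => X j ω) ∂μ ≤
      ∫ ω, Bop (∫ ω', X i ω' ∂μ) i g (fun j => X j ω) ∂μ := by
  set P := ∫ ω', X i ω' ∂μ with hP
  have hA : Integrable (fun ω => g (Function.update (fun j => X j ω) i 0)) μ :=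
    intble μ X hX hbin (fun x => g (Function.update x i 0)) (hg.comp measurable_update_left)
  have hDm : Measurable (DeltaF i g) := meas_DeltaF hg
  have hD : Integrable (fun ω => DeltaF i g (fun j => X j ω)) μ :=
    intble μ X hX hbin _ hDm
  have hB : Integrable (fun ω => DeltaF i g (fun j => X j ω) * X i ω) μ :=
    intble μ X hX hbin (fun x => DeltaF i g x * x i) (hDm.mul (measurable_pi_apply i))
  have hsplit : ∫ ω, g (fun j => X j ω) ∂μ
      = (∫ ω, g (Function.update (fun j => X j ω) i 0) ∂μ)
        + ∫ ω, DeltaF i g (fun j => X j ω) * X i ω ∂μ := by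
    rw [← integral_add hA hB]
    exact integral_congr_ae (ae_of_all _ fun ω => decomp hbin g i ω)
  have hcov : ∫ ω, DeltaF i g (fun j => X j ω) * X i ω ∂μ
      ≤ (∫ ω, DeltaF i g (fun j => X j ω) ∂μ) * P := by
    have := hNA i (DeltaF i g) id hDm (hgood i)
      (fun x y hxy => deltaF_congr hxy) measurable_id monotone_id
    simpa using this
  have hrhs : ∫ ω, Bop P i g (fun j => X j ω) ∂μ
      = (∫ ω, g (Function.update (fun j => X j ω) i 0) ∂μ)
        + P * ∫ ω, DeltaF i g (fun j => X j ω) ∂μ := by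
    have hpt : ∀ ω, Bop P i g (fun j => X j ω)
        = g (Function.update (fun j => X j ω) i 0) + P * DeltaF i g (fun j => X j ω) := by
      intro ω; simp only [Bop, DeltaF]; ring
    calc ∫ ω, Bop P i g (fun j => X j ω) ∂μ
        = ∫ ω, (g (Function.update (fun j => X j ω) i 0)
            + P * DeltaF i g (fun j => X j ω)) ∂μ :=
          integral_congr_ae (ae_of_all _ fun ω => hpt ω)
      _ = (∫ ω, g (Function.update (fun j => X j ω) i 0) ∂μ)
            + ∫ ω, P * DeltaF i g (fun j => X j ω) ∂μ :=
          integral_add hA (hD.const_mul P)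
      _ = _ := by rw [integral_const_mul]
  rw [hsplit, hrhs]
  nlinarith [hcov]


/-- One replacement step, equality version, via independence. -/
lemma step_eq {Xs : Fin n → Ω → ℝ} (hXs : ∀ i, Measurable (Xs i))
    (hbs : ∀ i ω, Xs i ω = 0 ∨ Xs i ω = 1)
    (hindep : iIndepFun Xs μ)
    {g : (Fin n → ℝ) → ℝ} (hg : Measurable g) (i : Fin n) {P : ℝ}
    (hPeq : ∫ ω, Xs i ω ∂μ = P) :
    ∫ ω, g (fun j => Xs j ω) ∂μ = ∫ ω, Bop P i g (fun j => Xs j ω) ∂μ := by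
  classical
  have hA : Integrable (fun ω => g (Function.update (fun j => Xs j ω) i 0)) μ :=
    intble μ Xs hXs hbs (fun x => g (Function.update x i 0)) (hg.comp measurable_update_left)
  have hDm : Measurable (DeltaF i g) := meas_DeltaF hg
  have hD : Integrable (fun ω => DeltaF i g (fun j => Xs j ω)) μ :=
    intble μ Xs hXs hbs _ hDm
  have hB : Integrable (fun ω => DeltaF i g (fun j => Xs j ω) * Xs i ω) μ :=
    intble μ Xs hXs hbs (fun x => DeltaF i g x * x i) (hDm.mul (measurable_pi_apply i))
  have hXi : Integrable (Xs i) μ :=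
    intble μ Xs hXs hbs (fun x => x i) (measurable_pi_apply i)
  -- independence of the Delta functional and `Xs i`
  set S : Finset (Fin n) := {i}ᶜ with hS
  set T : Finset (Fin n) := {i} with hT
  have hST : Disjoint S T := disjoint_compl_left
  have base := hindep.indepFun_finset S T hST hXs
  set Φ : ({x // x ∈ S} → ℝ) → ℝ :=
    fun v => DeltaF i g (fun j => if h : j ∈ S then v ⟨j, h⟩ else 0) with hΦdef
  have hΦ : Measurable Φ := by
    apply hDm.comp
    apply measurable_pi_lambda
    intro j
    by_cases h : j ∈ S
    · simpa [h] using measurable_pi_apply (⟨j, h⟩ : {x // x ∈ S})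
    · simpa [h] using (measurable_const : Measurable fun _ : {x // x ∈ S} → ℝ => (0:ℝ))
  set Ψ : ({x // x ∈ T} → ℝ) → ℝ := fun v => v ⟨i, Finset.mem_singleton_self i⟩ with hΨdef
  have hΨ : Measurable Ψ := measurable_pi_apply _
  have ind0 := base.comp hΦ hΨ
  have hl : (Φ ∘ fun a (j : {x // x ∈ S}) => Xs j a)
      = fun ω => DeltaF i g (fun j => Xs j ω) := by
    funext ω
    apply deltaF_congr
    intro j hj
    have hjS : j ∈ S := by simp [hS, hT, Finset.mem_compl, Finset.mem_singleton, hj]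
    simp [hjS]
  have hr : (Ψ ∘ fun a (j : {x // x ∈ T}) => Xs j a) = Xs i := rfl
  rw [hl, hr] at ind0
  have hmul := ind0.integral_fun_mul_eq_mul_integral hD.aestronglyMeasurable hXi.aestronglyMeasurable
  have hcov : ∫ ω, DeltaF i g (fun j => Xs j ω) * Xs i ω ∂μ
      = (∫ ω, DeltaF i g (fun j => Xs j ω) ∂μ) * P := by
    rw [← hPeq]
    exact hmul
  have hsplit : ∫ ω, g (fun j => Xs j ω) ∂μ
      = (∫ ω, g (Function.update (fun j => Xs j ω) i 0) ∂μ)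
        + ∫ ω, DeltaF i g (fun j => Xs j ω) * Xs i ω ∂μ := by
    rw [← integral_add hA hB]
    exact integral_congr_ae (ae_of_all _ fun ω => decomp hbs g i ω)
  have hrhs : ∫ ω, Bop P i g (fun j => Xs j ω) ∂μ
      = (∫ ω, g (Function.update (fun j => Xs j ω) i 0) ∂μ)
        + P * ∫ ω, DeltaF i g (fun j => Xs j ω) ∂μ := by
    have hpt : ∀ ω, Bop P i g (fun j => Xs j ω)
        = g (Function.update (fun j => Xs j ω) i 0) + P * DeltaF i g (fun j => Xs j ω) := by
      intro ω; simp only [Bop, DeltaF]; ring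
    calc ∫ ω, Bop P i g (fun j => Xs j ω) ∂μ
        = ∫ ω, (g (Function.update (fun j => Xs j ω) i 0)
            + P * DeltaF i g (fun j => Xs j ω)) ∂μ :=
          integral_congr_ae (ae_of_all _ fun ω => hpt ω)
      _ = (∫ ω, g (Function.update (fun j => Xs j ω) i 0) ∂μ)
            + ∫ ω, P * DeltaF i g (fun j => Xs j ω) ∂μ :=
          integral_add hA (hD.const_mul P)
      _ = _ := by rw [integral_const_mul]
  rw [hsplit, hrhs, hcov]
  ring

/-- Chain of inequalities for the 1-NA variables. -/
lemma chain_le (hX : ∀ i, Measurable (X i)) (hbin : ∀ i ω, X i ω = 0 ∨ X i ω = 1)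
    (hNA : OneNA μ X) {g : (Fin n → ℝ) → ℝ} (hg : Measurable g) (hgood : GoodDelta g)
    (hp0 : ∀ i, 0 ≤ ∫ ω, X i ω ∂μ) (hp1 : ∀ i, ∫ ω, X i ω ∂μ ≤ 1) :
    ∀ j, ∫ ω, g (fun k => X k ω) ∂μ
      ≤ ∫ ω, Gop (fun i => ∫ ω', X i ω' ∂μ) g j (fun k => X k ω) ∂μ := by
  intro j
  induction j with
  | zero => exact le_rfl
  | succ j ih =>
      refine le_trans ih ?_
      by_cases h : n - (j+1) < n
      · simp only [Gop, dif_pos h]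
        exact step_le μ hX hbin hNA (meas_Gop hg j)
          (good_Gop hp0 hp1 hgood j) ⟨n - (j+1), h⟩
      · simp only [Gop, dif_neg h]
        exact le_rfl

/-- Chain of equalities for the independent variables. -/
lemma chain_eq {Xs : Fin n → Ω → ℝ} (hXs : ∀ i, Measurable (Xs i))
    (hbs : ∀ i ω, Xs i ω = 0 ∨ Xs i ω = 1)
    (hindep : iIndepFun Xs μ)
    {g : (Fin n → ℝ) → ℝ} (hg : Measurable g) (p : Fin n → ℝ)
    (hPeq : ∀ i, ∫ ω, Xs i ω ∂μ = p i) :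
    ∀ j, ∫ ω, g (fun k => Xs k ω) ∂μ = ∫ ω, Gop p g j (fun k => Xs k ω) ∂μ := by
  intro j
  induction j with
  | zero => rfl
  | succ j ih =>
      rw [ih]
      by_cases h : n - (j+1) < n
      · simp only [Gop, dif_pos h]
        exact step_eq μ hXs hbs hindep (meas_Gop hg j) ⟨n - (j+1), h⟩ (hPeq _)
      · simp only [Gop, dif_neg h]

end Prob

def DepLt (k : ℕ) (g : (Fin n → ℝ) → ℝ) : Prop :=
  ∀ x y : Fin n → ℝ, (∀ j : Fin n, (j : ℕ) < k → x j = y j) → g x = g y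

lemma depLt_Bop {g : (Fin n → ℝ) → ℝ} {i : Fin n} (h : DepLt ((i : ℕ) + 1) g) (p : ℝ) :
    DepLt (i : ℕ) (Bop p i g) := by
  intro x y hxy
  have hc : ∀ c : ℝ, g (Function.update x i c) = g (Function.update y i c) := by
    intro c
    apply h
    intro j hj
    rcases eq_or_ne j i with rfl | hji
    · simp
    · have hji' : (j : ℕ) < (i : ℕ) :=
        lt_of_le_of_ne (Nat.lt_succ_iff.1 hj) fun he => hji (Fin.ext he)
      simp [Function.update_of_ne hji, hxy j hji']
  simp [Bop, hc 0, hc 1]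

lemma depLt_Gop (p : Fin n → ℝ) {g : (Fin n → ℝ) → ℝ} (hg : DepLt n g) :
    ∀ j, j ≤ n → DepLt (n - j) (Gop p g j)
  | 0, _ => by simpa [Gop] using hg
  | (j+1), hj => by
      have ih := depLt_Gop p hg j (Nat.le_of_succ_le hj)
      by_cases h : n - (j+1) < n
      · simp only [Gop, dif_pos h]
        have he : n - j = (n - (j+1)) + 1 := by omega
        rw [he] at ih
        exact depLt_Bop (i := ⟨n - (j+1), h⟩) ih _
      · simp only [Gop, dif_neg h]
        have he : n - (j+1) = n - j := by omega
        rw [he]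
        exact ih

lemma Gop_top_const {p : Fin n → ℝ} {g : (Fin n → ℝ) → ℝ} (hg : DepLt n g)
    (x y : Fin n → ℝ) : Gop p g n x = Gop p g n y := by
  have h := depLt_Gop p hg n le_rfl
  rw [Nat.sub_self] at h
  exact h x y fun j hj => absurd hj (by omega)

end ExpDom

/-- Exponential-moment domination for submodular functions under 1-negative association. -/
theorem exp_moment_domination_submodular {Ω : Type*} [MeasurableSpace Ω] (μ : Measure Ω)
    [IsProbabilityMeasure μ] {n : ℕ} (X Xstar : Fin n → Ω → ℝ)
    (hX : ∀ i, Measurable (X i)) (hbin : ∀ i ω, X i ω = 0 ∨ X i ω = 1)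
    (hNA : OneNA μ X)
    (hXstar : ∀ i, Measurable (Xstar i)) (hbinstar : ∀ i ω, Xstar i ω = 0 ∨ Xstar i ω = 1)
    (hindep : iIndepFun Xstar μ)
    (hmarg : ∀ i, Measure.map (Xstar i) μ = Measure.map (X i) μ) :
    ∀ (f : (Fin n → ℝ) → ℝ), Measurable f → MonoCube f → SubmodCube f →
      ∀ l : ℝ, l < 0 →
        ∫ ω, Real.exp (l * f (fun j => X j ω)) ∂μ ≤
          ∫ ω, Real.exp (l * f (fun j => Xstar j ω)) ∂μ := by
  intro f hf hmono hsub l hl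
  classical
  set g : (Fin n → ℝ) → ℝ := fun x => Real.exp (l * f x) with hgdef
  have hg : Measurable g := (hf.const_mul l).exp
  have hgood : ExpDom.GoodDelta g := ExpDom.good_base hmono hsub hl
  set p : Fin n → ℝ := fun i => ∫ ω, X i ω ∂μ with hpdef
  have hp0 : ∀ i, 0 ≤ p i := fun i =>
    integral_nonneg fun ω => by rcases hbin i ω with h | h <;> simp [h]
  have hp1 : ∀ i, p i ≤ 1 := by
    intro i
    have hint : Integrable (X i) μ :=
      ExpDom.intble μ X hX hbin (fun x => x i) (measurable_pi_apply i)
    calc p i ≤ ∫ _ω, (1:ℝ) ∂μ := by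
          refine integral_mono hint (integrable_const 1) fun ω => ?_
          rcases hbin i ω with h | h <;> simp [h]
      _ = 1 := by simp
  have hDep : ExpDom.DepLt n g := fun x y hxy => by
    have : x = y := funext fun j => hxy j j.isLt
    rw [this]
  have hPeq : ∀ i, ∫ ω, Xstar i ω ∂μ = p i := by
    intro i
    calc ∫ ω, Xstar i ω ∂μ
        = ∫ y, y ∂(Measure.map (Xstar i) μ) :=
          (integral_map (hXstar i).aemeasurable aestronglyMeasurable_id).symm
      _ = ∫ y, y ∂(Measure.map (X i) μ) := by rw [hmarg i]
      _ = ∫ ω, X i ω ∂μ := integral_map (hX i).aemeasurable aestronglyMeasurable_id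
  have hchainX := ExpDom.chain_le μ hX hbin hNA hg hgood hp0 hp1 n
  have hchainS := ExpDom.chain_eq μ hXstar hbinstar hindep hg p hPeq n
  have hconstX : ∫ ω, ExpDom.Gop p g n (fun k => X k ω) ∂μ
      = ExpDom.Gop p g n (fun _ => 0) := by
    calc ∫ ω, ExpDom.Gop p g n (fun k => X k ω) ∂μ
        = ∫ _ω, ExpDom.Gop p g n (fun _ => 0) ∂μ :=
          integral_congr_ae (ae_of_all _ fun ω => ExpDom.Gop_top_const hDep _ _)
      _ = ExpDom.Gop p g n (fun _ => 0) := by simp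
  have hconstS : ∫ ω, ExpDom.Gop p g n (fun k => Xstar k ω) ∂μ
      = ExpDom.Gop p g n (fun _ => 0) := by
    calc ∫ ω, ExpDom.Gop p g n (fun k => Xstar k ω) ∂μ
        = ∫ _ω, ExpDom.Gop p g n (fun _ => 0) ∂μ :=
          integral_congr_ae (ae_of_all _ fun ω => ExpDom.Gop_top_const hDep _ _)
      _ = ExpDom.Gop p g n (fun _ => 0) := by simp
  calc ∫ ω, Real.exp (l * f (fun j => X j ω)) ∂μ
      = ∫ ω, g (fun j => X j ω) ∂μ := rfl
    _ ≤ ∫ ω, ExpDom.Gop p g n (fun k => X k ω) ∂μ := hchainX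
    _ = ExpDom.Gop p g n (fun _ => 0) := hconstX
    _ = ∫ ω, ExpDom.Gop p g n (fun k => Xstar k ω) ∂μ := hconstS.symm
    _ = ∫ ω, g (fun j => Xstar j ω) ∂μ := hchainS.symm
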